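/- Let d ≥ 1 and let ρ be a set of states on ℂ^d indexed by a finite set A. Then ρ is classical if and only if there exist a finite index set Λ', positive semidefinite d×d matrices σ̃'_μ, and points D_μ which are extreme points of the noncontextual preparation-assignment polytope 𝕢_ρ (i.e. D_μ ∈ 𝕢_ρ and whenever D_μ lies strictly between two points of 𝕢_ρ both of them equal D_μ), such that ρ_a = ∑_{μ∈Λ'} D_μ(a) • σ̃'_μ for all a ∈ A. -/

import Mathlib

open Matrix BigOperators
open scoped ComplexOrder

noncomputable section

/-- The noncontextual preparation-assignment polytope of a set of states. -/
def statesPolytope {d : ℕ} {A : Type*} [Fintype A]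
    (ρ : A → Matrix (Fin d) (Fin d) ℂ) : Set (A → ℝ) :=
  {q | (∀ a, 0 ≤ q a) ∧ (∑ a : A, q a = 1) ∧
    ∀ α : A → ℝ, (∑ a : A, α a • ρ a = 0) → (∑ a : A, α a * q a = 0)}

/-- A set of states is classical. -/
def IsClassicalStates {d : ℕ} {A : Type*} [Fintype A]
    (ρ : A → Matrix (Fin d) (Fin d) ℂ) : Prop :=
  ∃ (n : ℕ) (σ : Fin n → Matrix (Fin d) (Fin d) ℂ) (q : Fin n → A → ℝ),
    (∀ l, (σ l).PosSemidef) ∧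
    (∀ l, q l ∈ statesPolytope ρ) ∧
    (∀ a : A, ρ a = ∑ l, q l a • σ l)

section Aux

variable {d : ℕ} {A : Type*} [Fintype A] (ρ : A → Matrix (Fin d) (Fin d) ℂ)

lemma statesPolytope_convex : Convex ℝ (statesPolytope ρ) := by
  rintro x ⟨hx0, hx1, hx2⟩ y ⟨hy0, hy1, hy2⟩ a b ha hb hab
  refine ⟨fun c => add_nonneg (mul_nonneg ha (hx0 c)) (mul_nonneg hb (hy0 c)), ?_, ?_⟩
  · simp only [Pi.add_apply, Pi.smul_apply, smul_eq_mul]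
    rw [Finset.sum_add_distrib, ← Finset.mul_sum, ← Finset.mul_sum, hx1, hy1]
    linarith
  · intro α hα
    have h1 := hx2 α hα
    have h2 := hy2 α hα
    have : ∀ c : A, α c * ((a • x + b • y) c) = a * (α c * x c) + b * (α c * y c) := by
      intro c; simp only [Pi.add_apply, Pi.smul_apply, smul_eq_mul]; ring
    rw [Finset.sum_congr rfl fun c _ => this c, Finset.sum_add_distrib,
      ← Finset.mul_sum, ← Finset.mul_sum, h1, h2]
    ring

lemma statesPolytope_isClosed : IsClosed (statesPolytope ρ) := by
  have : statesPolytope ρ = {q : A → ℝ | ∀ a, 0 ≤ q a} ∩ ({q | ∑ a : A, q a = 1} ∩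
      {q | ∀ α : A → ℝ, (∑ a : A, α a • ρ a = 0) → (∑ a : A, α a * q a = 0)}) := by
    ext q; simp [statesPolytope, and_assoc]
  rw [this]
  refine IsClosed.inter ?_ (IsClosed.inter ?_ ?_)
  · rw [Set.setOf_forall]
    exact isClosed_iInter fun a => isClosed_le continuous_const (continuous_apply a)
  · exact isClosed_eq (continuous_finset_sum _ fun a _ => continuous_apply a) continuous_const
  · rw [Set.setOf_forall]
    refine isClosed_iInter fun α => ?_
    by_cases hα : (∑ a : A, α a • ρ a = 0)
    · have : {q : A → ℝ | (∑ a : A, α a • ρ a = 0) → (∑ a : A, α a * q a = 0)}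
          = {q : A → ℝ | ∑ a : A, α a * q a = 0} := by
        ext q; simp [hα]
      rw [this]
      exact isClosed_eq (continuous_finset_sum _ fun a _ =>
        continuous_const.mul (continuous_apply a)) continuous_const
    · have : {q : A → ℝ | (∑ a : A, α a • ρ a = 0) → (∑ a : A, α a * q a = 0)} = Set.univ := by
        ext q; simp [hα]
      rw [this]; exact isClosed_univ

lemma statesPolytope_isCompact : IsCompact (statesPolytope ρ) := by
  refine IsCompact.of_isClosed_subset (isCompact_univ_pi fun _ : A => isCompact_Icc
    (α := ℝ) (a := 0) (b := 1)) (statesPolytope_isClosed ρ) ?_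
  rintro q ⟨h0, h1, -⟩ a -
  refine ⟨h0 a, ?_⟩
  calc q a ≤ ∑ b : A, q b := Finset.single_le_sum (fun b _ => h0 b) (Finset.mem_univ a)
  _ = 1 := h1

lemma statesPolytope_ext_finite : (Set.extremePoints ℝ (statesPolytope ρ)).Finite := by
  have hinj : Set.InjOn (fun p : A → ℝ => {a | p a ≠ 0})
      (Set.extremePoints ℝ (statesPolytope ρ)) := by
    intro p hp p' hp' hsupp
    by_contra hne
    have hsupp' : ∀ a, p a = 0 ↔ p' a = 0 := by
      intro a
      have h := Set.ext_iff.mp hsupp a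
      simp only [Set.mem_setOf_eq] at h
      exact not_iff_not.mp h
    obtain ⟨hpS, hpext⟩ := hp
    obtain ⟨hp0, hp1, hp2⟩ := hpS
    obtain ⟨hp'S, -⟩ := hp'
    obtain ⟨hp'0, hp'1, hp'2⟩ := hp'S
    have hF : (Finset.univ.filter (fun a => p a ≠ 0)).Nonempty := by
      by_contra h
      rw [Finset.not_nonempty_iff_eq_empty, Finset.filter_eq_empty_iff] at h
      have : ∑ a : A, p a = 0 := Finset.sum_eq_zero (fun a _ => by
        have := h (Finset.mem_univ a); simpa using this)
      rw [hp1] at this; norm_num at this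
    have hA : (Finset.univ : Finset A).Nonempty := ⟨hF.choose, Finset.mem_univ _⟩
    set m := (Finset.univ.filter (fun a => p a ≠ 0)).inf' hF p with hm_def
    have hm : 0 < m := by
      rw [hm_def, Finset.lt_inf'_iff]
      intro b hb
      rw [Finset.mem_filter] at hb
      exact lt_of_le_of_ne (hp0 b) (Ne.symm hb.2)
    set M := Finset.univ.sup' hA (fun a => |p' a - p a|) with hM_def
    have hM : 0 ≤ M := le_trans (abs_nonneg (p' hA.choose - p hA.choose))
      (Finset.le_sup' (fun a => |p' a - p a|) (Finset.mem_univ hA.choose))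
    set t := m / (M + 1) with ht_def
    have ht : 0 < t := div_pos hm (by linarith)
    have key : ∀ a, |t * (p' a - p a)| ≤ p a := by
      intro a
      by_cases hpa : p a = 0
      · have : p' a = 0 := (hsupp' a).mp hpa
        simp [hpa, this]
      · have h1 : m ≤ p a := Finset.inf'_le _ (by simp [hpa])
        have h2 : |p' a - p a| ≤ M := Finset.le_sup' (fun a => |p' a - p a|) (Finset.mem_univ a)
        rw [abs_mul, abs_of_pos ht]
        have h3 : t * |p' a - p a| ≤ t * M := mul_le_mul_of_nonneg_left h2 ht.le
        have h4 : t * M ≤ m := by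
          rw [ht_def, div_mul_eq_mul_div, div_le_iff₀ (by linarith)]
          nlinarith
        linarith
    set x := fun a => p a + t * (p' a - p a) with hx_def
    set y := fun a => p a - t * (p' a - p a) with hy_def
    have hmemx : x ∈ statesPolytope ρ := by
      refine ⟨fun a => ?_, ?_, ?_⟩
      · have := abs_le.mp (key a); simp only [hx_def]; linarith [this.1]
      · simp only [hx_def]
        rw [Finset.sum_congr rfl (fun a _ => by ring_nf :
          ∀ a ∈ Finset.univ, p a + t * (p' a - p a) = p a + (t * p' a - t * p a))]
        rw [Finset.sum_add_distrib, Finset.sum_sub_distrib, ← Finset.mul_sum, ← Finset.mul_sum,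
          hp1, hp'1]
        ring
      · intro α hα
        have c1 := hp2 α hα
        have c2 := hp'2 α hα
        have : ∀ a : A, α a * x a = α a * p a + (t * (α a * p' a) - t * (α a * p a)) := by
          intro a; simp only [hx_def]; ring
        rw [Finset.sum_congr rfl fun a _ => this a, Finset.sum_add_distrib,
          Finset.sum_sub_distrib, ← Finset.mul_sum, ← Finset.mul_sum, c1, c2]
        ring
    have hmemy : y ∈ statesPolytope ρ := by
      refine ⟨fun a => ?_, ?_, ?_⟩
      · have := abs_le.mp (key a); simp only [hy_def]; linarith [this.2]
      · simp only [hy_def]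
        rw [Finset.sum_congr rfl (fun a _ => by ring_nf :
          ∀ a ∈ Finset.univ, p a - t * (p' a - p a) = p a - (t * p' a - t * p a))]
        rw [Finset.sum_sub_distrib, Finset.sum_sub_distrib, ← Finset.mul_sum, ← Finset.mul_sum,
          hp1, hp'1]
        ring
      · intro α hα
        have c1 := hp2 α hα
        have c2 := hp'2 α hα
        have : ∀ a : A, α a * y a = α a * p a - (t * (α a * p' a) - t * (α a * p a)) := by
          intro a; simp only [hy_def]; ring
        rw [Finset.sum_congr rfl fun a _ => this a, Finset.sum_sub_distrib,
          Finset.sum_sub_distrib, ← Finset.mul_sum, ← Finset.mul_sum, c1, c2]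
        ring
    have hseg : p ∈ openSegment ℝ x y := by
      refine ⟨1/2, 1/2, by norm_num, by norm_num, by norm_num, ?_⟩
      funext a
      simp only [Pi.add_apply, Pi.smul_apply, smul_eq_mul, hx_def, hy_def]
      ring
    have hxp := hpext hmemx hmemy hseg
    apply hne
    funext a
    have := congrFun hxp a
    simp only [hx_def] at this
    have ht' : t * (p' a - p a) = 0 := by linarith
    rcases mul_eq_zero.mp ht' with h | h
    · exact absurd h (ne_of_gt ht)
    · linarith
  haveI : Finite (Set A) := inferInstance
  exact Set.Finite.of_finite_image (Set.toFinite _) hinj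

lemma statesPolytope_eq_convexHull_ext :
    statesPolytope ρ = convexHull ℝ (Set.extremePoints ℝ (statesPolytope ρ)) := by
  have h1 := closure_convexHull_extremePoints (statesPolytope_isCompact ρ)
    (statesPolytope_convex ρ)
  have h2 : IsClosed (convexHull ℝ (Set.extremePoints ℝ (statesPolytope ρ))) :=
    (statesPolytope_ext_finite ρ).isClosed_convexHull (𝕜 := ℝ)
  rw [h2.closure_eq] at h1
  exact h1.symm

lemma psd_real_smul {M : Matrix (Fin d) (Fin d) ℂ} (hM : M.PosSemidef) {w : ℝ} (hw : 0 ≤ w) :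
    (w • M).PosSemidef := by
  have hconv : w • M = (w : ℂ) • M := by
    ext i j; simp [Matrix.smul_apply, Complex.real_smul]
  rw [hconv]
  constructor
  · have := hM.1
    unfold Matrix.IsHermitian at *
    rw [Matrix.conjTranspose_smul, this]
    congr 1
    simp [Complex.ext_iff]
  · intro v
    exact (hM.smul (Complex.zero_le_real.mpr hw)).2 v

end Aux

theorem classicalStates_iff_extreme_point_decomposition
    {d : ℕ} (hd : 1 ≤ d) {A : Type*} [Fintype A]
    (ρ : A → Matrix (Fin d) (Fin d) ℂ)
    (hpsd : ∀ a, (ρ a).PosSemidef)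
    (htr : ∀ a, (ρ a).trace = 1) :
    IsClassicalStates ρ ↔
      ∃ (n : ℕ) (σ : Fin n → Matrix (Fin d) (Fin d) ℂ) (D : Fin n → A → ℝ),
        (∀ μ, (σ μ).PosSemidef) ∧
        (∀ μ, D μ ∈ (statesPolytope ρ).extremePoints ℝ) ∧
        (∀ a : A, ρ a = ∑ μ, D μ a • σ μ) := by
  constructor
  · rintro ⟨n, σ, q, hσ, hq, hρ⟩
    -- each q l is a convex combination of extreme points
    have hrep : ∀ l : Fin n, ∃ (ι : Type) (t : Finset ι) (w : ι → ℝ) (z : ι → A → ℝ),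
        (∀ i ∈ t, 0 ≤ w i) ∧ ∑ i ∈ t, w i = 1 ∧
        (∀ i ∈ t, z i ∈ (statesPolytope ρ).extremePoints ℝ) ∧
        (∑ i ∈ t, w i • z i) = q l := by
      intro l
      have hmem : q l ∈ convexHull ℝ (Set.extremePoints ℝ (statesPolytope ρ)) := by
        rw [← statesPolytope_eq_convexHull_ext]; exact hq l
      rw [convexHull_eq] at hmem
      obtain ⟨ι, t, w, z, hw0, hw1, hz, hcm⟩ := hmem
      exact ⟨ι, t, w, z, hw0, hw1, hz, by rw [← Finset.centerMass_eq_of_sum_1 _ _ hw1, hcm]⟩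
    choose ι t w z hw0 hw1 hz hcm using hrep
    -- big index type
    let Λ := Σ l : Fin n, {i : ι l // i ∈ t l}
    let e := (Fintype.equivFin Λ).symm
    refine ⟨Fintype.card Λ, fun μ => w (e μ).1 (e μ).2.1 • σ (e μ).1,
      fun μ => z (e μ).1 (e μ).2.1, ?_, ?_, ?_⟩
    · intro μ
      exact psd_real_smul (hσ (e μ).1) (hw0 _ _ (e μ).2.2)
    · intro μ
      exact hz _ _ (e μ).2.2
    · intro a
      rw [hρ a]
      show _ = ∑ μ : Fin (Fintype.card Λ),
        z (e μ).1 (e μ).2.1 a • (w (e μ).1 (e μ).2.1 • σ (e μ).1)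
      rw [Equiv.sum_comp e (fun p : Λ => z p.1 p.2.1 a • (w p.1 p.2.1 • σ p.1))]
      rw [← Finset.univ_sigma_univ, Finset.sum_sigma]
      congr 1
      funext l
      show q l a • σ l = ∑ s : {i // i ∈ t l}, z l s.1 a • (w l s.1 • σ l)
      rw [Finset.sum_coe_sort (t l) (fun i => z l i a • (w l i • σ l))]
      have hq' : q l a = ∑ i ∈ t l, w l i * z l i a := by
        rw [← hcm l]; simp [Finset.sum_apply]
      rw [hq', Finset.sum_smul]
      exact Finset.sum_congr rfl fun i _ => by rw [smul_smul, mul_comm]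
  · rintro ⟨n, σ, D, hσ, hD, h⟩
    exact ⟨n, σ, D, hσ, fun l => extremePoints_subset (hD l), h⟩

end
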